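/- arXiv:math/0501090 — 2 statements merged into one kernel-verified Lean document; each statement's English description precedes it below -/
import Mathlib

section
/- Let G be a group and A : G → SU(2) an irreducible homomorphism. Suppose there exist two distinct nontrivial homomorphisms χ, η : G → {±1} and elements u, v ∈ SU(2) such that χ·A = u·A·u⁻¹ and η·A = v·A·v⁻¹ (pointwise). Then, after conjugation in SU(2), the image of A is contained in the quaternion group Q₈ = {±1, ±i, ±j, ±k}. -/
open Quaternion

/-- The group `SU(2)`, identified with the group of unit quaternions. -/
noncomputable abbrev SU2 : Type := Metric.sphere (0 : ℍ[ℝ]) 1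

/-- The quaternion `i`. -/
noncomputable def qi : ℍ[ℝ] := ⟨0,1,0,0⟩
/-- The quaternion `j`. -/
noncomputable def qj : ℍ[ℝ] := ⟨0,0,1,0⟩
/-- The quaternion `k`. -/
noncomputable def qk : ℍ[ℝ] := ⟨0,0,0,1⟩

lemma mem_SU2_of_normSq {q : ℍ[ℝ]} (h : Quaternion.normSq q = 1) :
    q ∈ Metric.sphere (0 : ℍ[ℝ]) 1 := by
  rw [mem_sphere_zero_iff_norm, norm_eq_sqrt_real_inner, Quaternion.inner_self, h]
  simp

/-- `i` as a unit quaternion. -/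
noncomputable def iSU : SU2 := ⟨qi, mem_SU2_of_normSq (by rw [Quaternion.normSq_def']; simp [qi])⟩
/-- `j` as a unit quaternion. -/
noncomputable def jSU : SU2 := ⟨qj, mem_SU2_of_normSq (by rw [Quaternion.normSq_def']; simp [qj])⟩
/-- `k` as a unit quaternion. -/
noncomputable def kSU : SU2 := ⟨qk, mem_SU2_of_normSq (by rw [Quaternion.normSq_def']; simp [qk])⟩
/-- `-1` as a unit quaternion. -/
noncomputable def negOne : SU2 := ⟨-1, by simp⟩

/-- The circle subgroup `S¹` of unit complex numbers `a + b·i` inside the unit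
quaternions. -/
noncomputable def circleSet : Set SU2 :=
  {u | (u : ℍ[ℝ]).imJ = 0 ∧ (u : ℍ[ℝ]).imK = 0}

/-- The binary dihedral group `S¹ ∪ j·S¹` inside the unit quaternions. -/
noncomputable def binDihSet : Set SU2 :=
  circleSet ∪ (fun w => jSU * w) '' circleSet

/-- A homomorphism to `SU(2)` is irreducible if its image is not contained in any
conjugate of the circle `S¹`. -/
noncomputable def IsIrredRep {G : Type*} [Group G] (A : G →* SU2) : Prop :=
  ¬ ∃ g : SU2, ∀ x : G, g * A x * g⁻¹ ∈ circleSet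

/-- The embedding of `{±1}` into the center of `SU(2)`. -/
noncomputable def sgn (s : ℤˣ) : SU2 := if s = 1 then 1 else negOne


/-- The quaternion group `Q₈ = {±1, ±i, ±j, ±k}` inside the unit quaternions. -/
noncomputable def Q8Set : Set SU2 :=
  {(1 : SU2), negOne, iSU, negOne * iSU, jSU, negOne * jSU, kSU, negOne * kSU}

section Aux

lemma SU2.nsq (x : SU2) : Quaternion.normSq (x : ℍ[ℝ]) = 1 := by
  have h : ‖(x : ℍ[ℝ])‖ = 1 := mem_sphere_zero_iff_norm.mp x.2
  have := Quaternion.normSq_eq_norm_mul_self (a := (x : ℍ[ℝ]))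
  rw [h] at this; simpa using this

lemma SU2.coe_mul (x y : SU2) : ((x * y : SU2) : ℍ[ℝ]) = (x : ℍ[ℝ]) * y := rfl

lemma SU2.ext' {x y : SU2} (h : (x : ℍ[ℝ]) = y) : x = y := Subtype.ext h

lemma negOne_coe : ((negOne : SU2) : ℍ[ℝ]) = -1 := rfl

lemma one_coe : ((1 : SU2) : ℍ[ℝ]) = 1 := rfl

lemma negOne_central (x : SU2) : negOne * x = x * negOne := by
  apply SU2.ext'
  rw [SU2.coe_mul, SU2.coe_mul, negOne_coe, neg_one_mul, mul_neg_one]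

lemma negOne_sq : negOne * negOne = (1 : SU2) := by
  apply SU2.ext'; rw [SU2.coe_mul, negOne_coe, one_coe, neg_one_mul, neg_neg]

lemma sgn_central (s : ℤˣ) (x : SU2) : sgn s * x = x * sgn s := by
  unfold sgn; split
  · rw [one_mul, mul_one]
  · exact negOne_central x

lemma sgn_sq (s : ℤˣ) : sgn s * sgn s = 1 := by
  unfold sgn; split
  · rw [one_mul]
  · exact negOne_sq

lemma sgn_mul (s t : ℤˣ) : sgn (s * t) = sgn s * sgn t := by
  rcases Int.units_eq_one_or s with rfl | rfl <;>
    rcases Int.units_eq_one_or t with rfl | rfl <;>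
    simp [sgn, negOne_sq]

lemma negOne_ne_one : (negOne : SU2) ≠ 1 := by
  intro h
  have := congrArg (fun x : SU2 => (x : ℍ[ℝ]).re) h
  simp [negOne_coe, one_coe] at this
  norm_num at this

lemma sgn_neg_one : sgn (-1) = negOne := by simp [sgn]

end Aux
section Quat

open Quaternion

@[simp] lemma qi_re : qi.re = 0 := rfl
@[simp] lemma qi_imI : qi.imI = 1 := rfl
@[simp] lemma qi_imJ : qi.imJ = 0 := rfl
@[simp] lemma qi_imK : qi.imK = 0 := rfl
@[simp] lemma qj_re : qj.re = 0 := rfl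
@[simp] lemma qj_imI : qj.imI = 0 := rfl
@[simp] lemma qj_imJ : qj.imJ = 1 := rfl
@[simp] lemma qj_imK : qj.imK = 0 := rfl
@[simp] lemma qk_re : qk.re = 0 := rfl
@[simp] lemma qk_imI : qk.imI = 0 := rfl
@[simp] lemma qk_imJ : qk.imJ = 0 := rfl
@[simp] lemma qk_imK : qk.imK = 1 := rfl

/-- An element commuting with something with nonzero `imI` and zero `imJ, imK`
lies in the circle. -/
lemma comm_circle {x c : ℍ[ℝ]} (hJ : c.imJ = 0) (hK : c.imK = 0) (hI : c.imI ≠ 0)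
    (h : x * c = c * x) : x.imJ = 0 ∧ x.imK = 0 := by
  have h3 := congrArg QuaternionAlgebra.imJ h
  have h4 := congrArg QuaternionAlgebra.imK h
  simp only [Quaternion.imJ_mul, Quaternion.imK_mul, hJ, hK] at h3 h4
  constructor
  · have : c.imI * x.imJ = 0 := by nlinarith [h4]
    exact (mul_eq_zero.mp this).resolve_left hI
  · have : c.imI * x.imK = 0 := by nlinarith [h3]
    exact (mul_eq_zero.mp this).resolve_left hI

/-- Pure unit quaternions square to `-1`. -/
lemma sq_neg_one_of_pure {p : ℍ[ℝ]} (hre : p.re = 0) (hn : normSq p = 1) :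
    p * p = -1 := by
  have : p ^ 2 = -((normSq p : ℝ) : ℍ[ℝ]) := (Quaternion.sq_eq_neg_normSq).mpr hre
  rw [hn] at this
  rw [← sq, this]; norm_num

/-- Conversely. -/
lemma pure_of_sq_neg_one {p : ℍ[ℝ]} (hn : normSq p = 1) (h : p * p = -1) :
    p.re = 0 := by
  have h1 := congrArg QuaternionAlgebra.re h
  simp only [Quaternion.re_mul, Quaternion.re_neg, Quaternion.re_one] at h1
  have hn' := Quaternion.normSq_def' p
  rw [hn] at hn'
  have : p.re ^ 2 = 0 := by nlinarith [h1, hn']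
  simpa using pow_eq_zero_iff (n := 2) (by norm_num) |>.mp this

end Quat
section Conj

open Quaternion

/-- Normalize a nonzero quaternion into `SU2`. -/
noncomputable def unitize (x : ℍ[ℝ]) (hx : x ≠ 0) : SU2 :=
  ⟨‖x‖⁻¹ • x, by
    rw [mem_sphere_zero_iff_norm, norm_smul, norm_inv, norm_norm,
      inv_mul_cancel₀ (norm_ne_zero_iff.mpr hx)]⟩

lemma unitize_coe (x : ℍ[ℝ]) (hx : x ≠ 0) : ((unitize x hx : SU2) : ℍ[ℝ]) = ‖x‖⁻¹ • x := rfl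

/-- If `x, y` are pure unit quaternions then `(x + y) * y = x * (x + y)`. -/
lemma key_intertwine {x y : ℍ[ℝ]} (hx : x * x = -1) (hy : y * y = -1) :
    (x + y) * y = x * (x + y) := by
  rw [add_mul, mul_add, hx, hy, add_comm]

/-- Conjugating a pure unit quaternion to `qi`. -/
lemma conj_to_qi {p : ℍ[ℝ]} (hp : p * p = -1) (hn : normSq p = 1) :
    ∃ w : SU2, (w : ℍ[ℝ]) * p = qi * (w : ℍ[ℝ]) := by
  have hqi : qi * qi = -1 := by
    ext <;> simp [Quaternion.re_mul, Quaternion.imI_mul, Quaternion.imJ_mul, Quaternion.imK_mul]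
  by_cases hc : qi + p = 0
  · -- p = -qi ; use jSU
    have hp' : p = -qi := by rw [← neg_eq_of_add_eq_zero_right hc]
    refine ⟨jSU, ?_⟩
    subst hp'
    show qj * -qi = qi * qj
    ext <;> simp [Quaternion.re_mul, Quaternion.imI_mul, Quaternion.imJ_mul,
      Quaternion.imK_mul]
  · refine ⟨unitize (qi + p) hc, ?_⟩
    rw [unitize_coe, smul_mul_assoc, mul_smul_comm, key_intertwine hqi hp]

end Conj
section Central

open Quaternion

/-- Value of a conjugate given an intertwining relation. -/
lemma conj_coe {w x : SU2} {c : ℍ[ℝ]} (hw : (w : ℍ[ℝ]) * x = c * w) :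
    ((w * x * w⁻¹ : SU2) : ℍ[ℝ]) = c := by
  calc ((w * x * w⁻¹ : SU2) : ℍ[ℝ]) = ((w : ℍ[ℝ]) * x) * ((w⁻¹ : SU2) : ℍ[ℝ]) := rfl
    _ = c * ((w : ℍ[ℝ]) * ((w⁻¹ : SU2) : ℍ[ℝ])) := by rw [hw, mul_assoc]
    _ = c * ((w * w⁻¹ : SU2) : ℍ[ℝ]) := rfl
    _ = c := by rw [mul_inv_cancel, one_coe, mul_one]

/-- Every unit quaternion is conjugate (by intertwining) to an element of the circle,
with `imI` equal to the norm of the imaginary part. -/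
lemma conj_to_circle (z : SU2) :
    ∃ w : SU2, (w : ℍ[ℝ]) * z =
      (((z : ℍ[ℝ]).re : ℍ[ℝ]) + ‖(z : ℍ[ℝ]).im‖ • qi) * w := by
  set q : ℍ[ℝ] := (z : ℍ[ℝ])
  by_cases him : q.im = 0
  · refine ⟨1, ?_⟩
    rw [him, one_coe, one_mul, mul_one, norm_zero]
    simp only [zero_smul, add_zero]
    conv_lhs => rw [← Quaternion.re_add_im q, him, add_zero]
  · set n : ℝ := ‖q.im‖ with hn
    have hn0 : n ≠ 0 := norm_ne_zero_iff.mpr him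
    set p : ℍ[ℝ] := n⁻¹ • q.im with hp
    have hpre : p.re = 0 := by simp [hp]
    have hpn : normSq p = 1 := by
      rw [Quaternion.normSq_eq_norm_mul_self, hp, norm_smul, norm_inv, norm_norm, ← hn,
        inv_mul_cancel₀ hn0, one_mul]
    obtain ⟨w, hw⟩ := conj_to_qi (sq_neg_one_of_pure hpre hpn) hpn
    refine ⟨w, ?_⟩
    have hq : q = (q.re : ℍ[ℝ]) + n • p := by
      rw [hp, smul_smul, mul_inv_cancel₀ hn0, one_smul, Quaternion.re_add_im]
    calc (w : ℍ[ℝ]) * q = (w : ℍ[ℝ]) * ((q.re : ℍ[ℝ]) + n • p) := by rw [← hq]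
      _ = (q.re : ℍ[ℝ]) * w + n • ((w : ℍ[ℝ]) * p) := by
          rw [mul_add, mul_smul_comm, Quaternion.coe_commutes]
      _ = (q.re : ℍ[ℝ]) * w + n • (qi * w) := by rw [hw]
      _ = ((q.re : ℍ[ℝ]) + n • qi) * w := by rw [add_mul, smul_mul_assoc]

/-- The centralizer of the image of an irreducible representation is `{±1}`. -/
lemma central_of_comm {G : Type*} [Group G] (A : G →* SU2) (hA : IsIrredRep A)
    (z : SU2) (hz : ∀ g : G, z * A g = A g * z) : z = 1 ∨ z = negOne := by
  by_contra hcon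
  push_neg at hcon
  obtain ⟨hz1, hzm1⟩ := hcon
  set q : ℍ[ℝ] := (z : ℍ[ℝ]) with hqdef
  have him : q.im ≠ 0 := by
    intro h0
    have hq : q = (q.re : ℍ[ℝ]) := by
      conv_lhs => rw [← Quaternion.re_add_im q, h0, add_zero]
    have hnq : q.re ^ 2 = 1 := by
      have h2 := SU2.nsq z
      rw [← hqdef, hq, Quaternion.normSq_coe] at h2
      exact h2
    have : (q.re - 1) * (q.re + 1) = 0 := by nlinarith
    rcases mul_eq_zero.mp this with h | h
    · have hre : q.re = 1 := by linarith
      exact hz1 (SU2.ext' (by rw [← hqdef, hq, hre, one_coe, Quaternion.coe_one]))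
    · have hre : q.re = -1 := by linarith
      exact hzm1 (SU2.ext' (by rw [← hqdef, hq, hre, negOne_coe, Quaternion.coe_neg,
        Quaternion.coe_one]))
  obtain ⟨w, hw⟩ := conj_to_circle z
  set c : ℍ[ℝ] := ((q.re : ℍ[ℝ]) + ‖q.im‖ • qi) with hc
  have hcJ : c.imJ = 0 := by simp [hc]
  have hcK : c.imK = 0 := by simp [hc]
  have hcI : c.imI ≠ 0 := by
    simp only [hc, Quaternion.imI_add, Quaternion.imI_coe, Quaternion.imI_smul, qi_imI,
      smul_eq_mul, mul_one, zero_add]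
    exact norm_ne_zero_iff.mpr him
  apply hA
  refine ⟨w, fun g => ?_⟩
  have hval : ((w * z * w⁻¹ : SU2) : ℍ[ℝ]) = c := conj_coe hw
  have e1 : (w * A g * w⁻¹) * (w * z * w⁻¹) = w * (A g * z) * w⁻¹ := by group
  have e2 : (w * z * w⁻¹) * (w * A g * w⁻¹) = w * (z * A g) * w⁻¹ := by group
  have e3 : (w * A g * w⁻¹) * (w * z * w⁻¹) = (w * z * w⁻¹) * (w * A g * w⁻¹) := by
    rw [e1, e2, hz g]
  have hcomm : ((w * A g * w⁻¹ : SU2) : ℍ[ℝ]) * c = c * ((w * A g * w⁻¹ : SU2) : ℍ[ℝ]) := by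
    rw [← hval, ← SU2.coe_mul, ← SU2.coe_mul, e3]
  exact comm_circle hcJ hcK hcI hcomm

end Central
section Comp

open Quaternion

lemma sq_one_SU2 {x : SU2} (h : x * x = 1) : x = 1 ∨ x = negOne := by
  have hq : ((x : ℍ[ℝ]) - 1) * ((x : ℍ[ℝ]) + 1) = 0 := by
    have h' : (x : ℍ[ℝ]) * x = 1 := by
      have := congrArg (fun y : SU2 => (y : ℍ[ℝ])) h
      simpa [SU2.coe_mul, one_coe] using this
    calc ((x : ℍ[ℝ]) - 1) * ((x : ℍ[ℝ]) + 1)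
        = (x : ℍ[ℝ]) * x - 1 := by noncomm_ring
      _ = 0 := by rw [h', sub_self]
  rcases mul_eq_zero.mp hq with h' | h'
  · left; exact SU2.ext' (by rw [one_coe]; linear_combination (norm := module) h')
  · right; exact SU2.ext' (by rw [negOne_coe]; linear_combination (norm := module) h')

lemma commI_comp {x : ℍ[ℝ]} (h : x * qi = qi * x) : x.imJ = 0 ∧ x.imK = 0 := by
  have hJ := congrArg QuaternionAlgebra.imJ h
  have hK := congrArg QuaternionAlgebra.imK h
  simp only [Quaternion.imJ_mul, Quaternion.imK_mul, qi_re, qi_imI, qi_imJ, qi_imK] at hJ hK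
  constructor <;> linarith

lemma anticommI_comp {x : ℍ[ℝ]} (h : x * qi = -(qi * x)) : x.re = 0 ∧ x.imI = 0 := by
  have hre := congrArg QuaternionAlgebra.re h
  have hI := congrArg QuaternionAlgebra.imI h
  simp only [Quaternion.re_mul, Quaternion.imI_mul, Quaternion.re_neg, Quaternion.imI_neg,
    qi_re, qi_imI, qi_imJ, qi_imK] at hre hI
  constructor <;> linarith

lemma commJ_comp {x : ℍ[ℝ]} (h : x * qj = qj * x) : x.imI = 0 ∧ x.imK = 0 := by
  have hI := congrArg QuaternionAlgebra.imI h
  have hK := congrArg QuaternionAlgebra.imK h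
  simp only [Quaternion.imI_mul, Quaternion.imK_mul, qj_re, qj_imI, qj_imJ, qj_imK] at hI hK
  constructor <;> linarith

lemma anticommJ_comp {x : ℍ[ℝ]} (h : x * qj = -(qj * x)) : x.re = 0 ∧ x.imJ = 0 := by
  have hre := congrArg QuaternionAlgebra.re h
  have hJ := congrArg QuaternionAlgebra.imJ h
  simp only [Quaternion.re_mul, Quaternion.imJ_mul, Quaternion.re_neg, Quaternion.imJ_neg,
    qj_re, qj_imI, qj_imJ, qj_imK] at hre hJ
  constructor <;> linarith

lemma anticomm_qi_of_jk {x : ℍ[ℝ]} (hre : x.re = 0) (hI : x.imI = 0) :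
    x * qi = -(qi * x) := by
  ext <;> simp [Quaternion.re_mul, Quaternion.imI_mul, Quaternion.imJ_mul, Quaternion.imK_mul,
    hre, hI]

end Comp
section GroupIds
variable {H : Type*} [Group H]

lemma conj_mul_split (w2 w1 a : H) :
    (w2 * w1) * a * (w2 * w1)⁻¹ = w2 * (w1 * a * w1⁻¹) * w2⁻¹ := by group

lemma conj_of_mul (w a b : H) :
    w * (a * b) * w⁻¹ = (w * a * w⁻¹) * (w * b * w⁻¹) := by group

lemma conj_sandwich (w x a : H) :
    (w * x * w⁻¹) * (w * a * w⁻¹) * (w * x * w⁻¹)⁻¹ = w * (x * a * x⁻¹) * w⁻¹ := by group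

end GroupIds
section Helpers

open Quaternion

lemma central_conj {s a x : SU2} (hs : s * x = x * s) :
    x * (s * a) * x⁻¹ = s * (x * a * x⁻¹) := by
  rw [← mul_assoc x s a, ← hs, mul_assoc s x a, mul_assoc]

lemma conj_negOne {x w : SU2} (hx : x * x = negOne) :
    (w * x * w⁻¹) * (w * x * w⁻¹) = negOne := by
  have e : (w * x * w⁻¹) * (w * x * w⁻¹) = w * (x * x) * w⁻¹ := by group
  rw [e, hx, ← negOne_central, mul_assoc, mul_inv_cancel, mul_one]

lemma negOne_inv : (negOne : SU2)⁻¹ = negOne := inv_eq_of_mul_eq_one_right negOne_sq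

lemma conj_negOne_mul (x b : SU2) : (negOne * x) * b * (negOne * x)⁻¹ = x * b * x⁻¹ := by
  rw [mul_inv_rev, negOne_inv]
  calc negOne * x * b * (x⁻¹ * negOne) = negOne * (x * b * x⁻¹) * negOne := by group
    _ = (x * b * x⁻¹) * negOne * negOne := by rw [negOne_central]
    _ = x * b * x⁻¹ := by rw [mul_assoc, negOne_sq, mul_one]

/-- The square of a twisting element is `-1`. -/
lemma twist_sq {G : Type*} [Group G] (A : G →* SU2) (hA : IsIrredRep A)
    (σ : G →* ℤˣ) (g1 : G) (hg1 : σ g1 = -1) (x : SU2)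
    (h : ∀ g, sgn (σ g) * A g = x * A g * x⁻¹) : x * x = negOne := by
  have hcen : ∀ g : G, (x * x) * A g = A g * (x * x) := by
    intro g
    have e0 : (x * x) * A g * (x * x)⁻¹ = x * (x * A g * x⁻¹) * x⁻¹ := by group
    have e1 : x * (x * A g * x⁻¹) * x⁻¹ = x * (sgn (σ g) * A g) * x⁻¹ := by rw [← h g]
    have e2 : x * (sgn (σ g) * A g) * x⁻¹ = sgn (σ g) * (x * A g * x⁻¹) :=
      central_conj (sgn_central _ _)
    have e3 : sgn (σ g) * (x * A g * x⁻¹) = sgn (σ g) * (sgn (σ g) * A g) := by rw [← h g]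
    have e4 : sgn (σ g) * (sgn (σ g) * A g) = A g := by rw [← mul_assoc, sgn_sq, one_mul]
    have : (x * x) * A g * (x * x)⁻¹ = A g := by rw [e0, e1, e2, e3, e4]
    exact mul_inv_eq_iff_eq_mul.mp this
  have hxx := central_of_comm A hA (x * x) hcen
  have hxne : x ≠ 1 ∧ x ≠ negOne := by
    constructor
    · rintro rfl
      have := h g1
      rw [hg1, sgn_neg_one, one_mul, inv_one, mul_one] at this
      exact negOne_ne_one (mul_right_cancel (b := A g1) (by rw [this, one_mul]))
    · rintro rfl
      have hh := h g1
      rw [hg1, sgn_neg_one, negOne_inv] at hh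
      have h4 : A g1 = A g1 * negOne :=
        mul_left_cancel (hh.trans (by rw [mul_assoc]))
      exact negOne_ne_one (mul_left_cancel (a := A g1) (by rw [← h4, mul_one])).symm
  rcases hxx with h' | h'
  · rcases sq_one_SU2 h' with h'' | h''
    · exact absurd h'' hxne.1
    · exact absurd h'' hxne.2
  · exact h'

lemma rel_to_cases {b x : SU2} (s : ℤˣ) (h : sgn s * b = x * b * x⁻¹) :
    (b : ℍ[ℝ]) * (x : ℍ[ℝ]) = (x : ℍ[ℝ]) * (b : ℍ[ℝ]) ∨
      (b : ℍ[ℝ]) * (x : ℍ[ℝ]) = -((x : ℍ[ℝ]) * (b : ℍ[ℝ])) := by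
  rcases Int.units_eq_one_or s with rfl | rfl
  · left
    rw [show sgn 1 = 1 by simp [sgn], one_mul] at h
    have h2 : b * x = x * b := eq_mul_inv_iff_mul_eq.mp h
    have h3 := congrArg (fun y : SU2 => (y : ℍ[ℝ])) h2
    simpa [SU2.coe_mul] using h3
  · right
    rw [sgn_neg_one] at h
    have h2 : (negOne * b) * x = x * b := eq_mul_inv_iff_mul_eq.mp h
    have h3 := congrArg (fun y : SU2 => (y : ℍ[ℝ])) h2
    simp only [SU2.coe_mul, negOne_coe] at h3
    rw [neg_one_mul, neg_mul] at h3
    exact neg_eq_iff_eq_neg.mp h3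

set_option maxHeartbeats 2000000 in
lemma mem_Q8 {x : SU2}
    (hi : (x : ℍ[ℝ]) * qi = qi * (x : ℍ[ℝ]) ∨ (x : ℍ[ℝ]) * qi = -(qi * (x : ℍ[ℝ])))
    (hj : (x : ℍ[ℝ]) * qj = qj * (x : ℍ[ℝ]) ∨ (x : ℍ[ℝ]) * qj = -(qj * (x : ℍ[ℝ]))) :
    x ∈ Q8Set := by
  have hn := SU2.nsq x
  rw [Quaternion.normSq_def'] at hn
  simp only [Q8Set, Set.mem_insert_iff, Set.mem_singleton_iff]
  rcases hi with hi | hi <;> rcases hj with hj | hj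
  · -- x = ±1
    obtain ⟨hJ, hK⟩ := commI_comp hi
    obtain ⟨hI, -⟩ := commJ_comp hj
    have ht : ((x : ℍ[ℝ]).re - 1) * ((x : ℍ[ℝ]).re + 1) = 0 := by nlinarith
    rcases mul_eq_zero.mp ht with h | h
    · have hx : x = 1 := SU2.ext' (by
        rw [one_coe]
        ext <;> simp only [Quaternion.re_one, Quaternion.imI_one, Quaternion.imJ_one,
          Quaternion.imK_one, hI, hJ, hK] <;> linarith)
      tauto
    · have hx : x = negOne := SU2.ext' (by
        rw [negOne_coe]
        ext <;> simp only [Quaternion.re_neg, Quaternion.imI_neg, Quaternion.imJ_neg,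
          Quaternion.imK_neg, Quaternion.re_one, Quaternion.imI_one, Quaternion.imJ_one,
          Quaternion.imK_one, hI, hJ, hK, neg_zero] <;> linarith)
      tauto
  · -- x = ±i
    obtain ⟨hJ, hK⟩ := commI_comp hi
    obtain ⟨hre, -⟩ := anticommJ_comp hj
    have ht : ((x : ℍ[ℝ]).imI - 1) * ((x : ℍ[ℝ]).imI + 1) = 0 := by nlinarith
    rcases mul_eq_zero.mp ht with h | h
    · have hx : x = iSU := SU2.ext' (by
        show _ = qi
        ext <;> simp only [qi_re, qi_imI, qi_imJ, qi_imK, hre, hJ, hK] <;> linarith)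
      tauto
    · have hx : x = negOne * iSU := SU2.ext' (by
        rw [SU2.coe_mul, negOne_coe, neg_one_mul]
        show _ = -qi
        ext <;> simp only [Quaternion.re_neg, Quaternion.imI_neg, Quaternion.imJ_neg,
          Quaternion.imK_neg, qi_re, qi_imI, qi_imJ, qi_imK, hre, hJ, hK, neg_zero] <;> linarith)
      tauto
  · -- x = ±j
    obtain ⟨hre, hI⟩ := anticommI_comp hi
    obtain ⟨-, hK⟩ := commJ_comp hj
    have ht : ((x : ℍ[ℝ]).imJ - 1) * ((x : ℍ[ℝ]).imJ + 1) = 0 := by nlinarith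
    rcases mul_eq_zero.mp ht with h | h
    · have hx : x = jSU := SU2.ext' (by
        show _ = qj
        ext <;> simp only [qj_re, qj_imI, qj_imJ, qj_imK, hre, hI, hK] <;> linarith)
      tauto
    · have hx : x = negOne * jSU := SU2.ext' (by
        rw [SU2.coe_mul, negOne_coe, neg_one_mul]
        show _ = -qj
        ext <;> simp only [Quaternion.re_neg, Quaternion.imI_neg, Quaternion.imJ_neg,
          Quaternion.imK_neg, qj_re, qj_imI, qj_imJ, qj_imK, hre, hI, hK, neg_zero] <;> linarith)
      tauto
  · -- x = ±k
    obtain ⟨hre, hI⟩ := anticommI_comp hi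
    obtain ⟨-, hJ⟩ := anticommJ_comp hj
    have ht : ((x : ℍ[ℝ]).imK - 1) * ((x : ℍ[ℝ]).imK + 1) = 0 := by nlinarith
    rcases mul_eq_zero.mp ht with h | h
    · have hx : x = kSU := SU2.ext' (by
        show _ = qk
        ext <;> simp only [qk_re, qk_imI, qk_imJ, qk_imK, hre, hI, hJ] <;> linarith)
      tauto
    · have hx : x = negOne * kSU := SU2.ext' (by
        rw [SU2.coe_mul, negOne_coe, neg_one_mul]
        show _ = -qk
        ext <;> simp only [Quaternion.re_neg, Quaternion.imI_neg, Quaternion.imJ_neg,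
          Quaternion.imK_neg, qk_re, qk_imI, qk_imJ, qk_imK, hre, hI, hJ, neg_zero] <;> linarith)
      tauto

end Helpers
lemma exists_neg_of_ne_one {G : Type*} [Group G] {σ : G →* ℤˣ} (hσ : σ ≠ 1) :
    ∃ g : G, σ g = -1 := by
  by_contra h
  push_neg at h
  apply hσ
  ext g
  rcases Int.units_eq_one_or (σ g) with h' | h'
  · simp [h']
  · exact absurd h' (h g)
set_option maxHeartbeats 2000000 in
/-- Construction of the second conjugator. -/
lemma build_w2 (v1 : SU2) (hc2 : ((v1 : ℍ[ℝ])) * (v1 : ℍ[ℝ]) = -1)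
    (hre : (v1 : ℍ[ℝ]).re = 0) (hI : (v1 : ℍ[ℝ]).imI = 0) :
    ∃ w2 : SU2, w2 * v1 = jSU * w2 ∧
      (w2 * iSU * w2⁻¹ = iSU ∨ w2 * iSU * w2⁻¹ = negOne * iSU) := by
  set q1 : ℍ[ℝ] := (v1 : ℍ[ℝ]) with hq1def
  by_cases hc : qj + q1 = 0
  · have hq1 : q1 = -qj := (neg_eq_of_add_eq_zero_right hc).symm
    refine ⟨iSU, SU2.ext' ?_, Or.inl (mul_inv_cancel_right _ _)⟩
    rw [SU2.coe_mul, SU2.coe_mul]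
    show qi * q1 = qj * qi
    rw [hq1]
    ext <;> simp [Quaternion.re_mul, Quaternion.imI_mul, Quaternion.imJ_mul,
      Quaternion.imK_mul]
  · have hqj2 : qj * qj = -1 := by
      ext <;> simp [Quaternion.re_mul, Quaternion.imI_mul, Quaternion.imJ_mul,
        Quaternion.imK_mul]
    refine ⟨unitize (qj + q1) hc, SU2.ext' ?_, Or.inr (SU2.ext' ?_)⟩
    · rw [SU2.coe_mul, SU2.coe_mul]
      show ((unitize (qj + q1) hc : SU2) : ℍ[ℝ]) * q1 = qj * ((unitize (qj + q1) hc : SU2) : ℍ[ℝ])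
      rw [unitize_coe, smul_mul_assoc, mul_smul_comm, key_intertwine hqj2 hc2]
    · have hre2 : (qj + q1).re = 0 := by
        simp [Quaternion.re_add, hre]
      have hI2 : (qj + q1).imI = 0 := by
        simp [Quaternion.imI_add, hI]
      have hac := anticomm_qi_of_jk hre2 hI2
      have hw2iq : ((unitize (qj + q1) hc : SU2) : ℍ[ℝ]) * qi
          = (-qi) * ((unitize (qj + q1) hc : SU2) : ℍ[ℝ]) := by
        rw [unitize_coe, smul_mul_assoc, hac, smul_neg, ← mul_smul_comm, ← neg_mul]
      rw [conj_coe hw2iq, SU2.coe_mul, negOne_coe, neg_one_mul]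
      rfl
/-- If an irreducible `A : G →* SU(2)` is fixed up to conjugacy by two distinct
nontrivial characters `χ, η : G →* {±1}`, then after conjugation the image of `A` is
contained in the quaternion group `Q₈`. -/
theorem two_twists_give_Q8 {G : Type*} [Group G]
    (A : G →* SU2) (hA : IsIrredRep A)
    (χ η : G →* ℤˣ) (hχ : χ ≠ 1) (hη : η ≠ 1) (hne : χ ≠ η) (u v : SU2)
    (h1 : ∀ g : G, sgn (χ g) * A g = u * A g * u⁻¹)
    (h2 : ∀ g : G, sgn (η g) * A g = v * A g * v⁻¹) :
    ∃ w : SU2, ∀ g : G, w * A g * w⁻¹ ∈ Q8Set := by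
  classical
  obtain ⟨gχ, hgχ⟩ := exists_neg_of_ne_one hχ
  -- the product character and its twisting relation
  have h3 : ∀ g : G, sgn ((χ * η) g) * A g = (u * v) * A g * (u * v)⁻¹ := by
    intro g
    rw [conj_mul_split u v (A g), ← h2 g, central_conj (sgn_central _ _), ← h1 g, ← mul_assoc, ← sgn_mul,
      mul_comm (η g) (χ g), MonoidHom.mul_apply]
  -- χ * η is nontrivial
  obtain ⟨gm, hgm⟩ : ∃ g : G, (χ * η) g = -1 := by
    have : ∃ g : G, χ g ≠ η g := by
      by_contra hcon
      push_neg at hcon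
      exact hne (MonoidHom.ext hcon)
    obtain ⟨g2, hg2⟩ := this
    refine ⟨g2, ?_⟩
    rw [MonoidHom.mul_apply]
    rcases Int.units_eq_one_or (χ g2) with h' | h' <;>
      rcases Int.units_eq_one_or (η g2) with h'' | h''
    · exact absurd (h'.trans h''.symm) hg2
    · rw [h', h'', one_mul]
    · rw [h', h'', mul_one]
    · exact absurd (h'.trans h''.symm) hg2
  obtain ⟨gη, hgη⟩ := exists_neg_of_ne_one hη
  -- squares of twisting elements
  have hu2 : u * u = negOne := twist_sq A hA χ gχ hgχ u h1
  have hv2 : v * v = negOne := twist_sq A hA η gη hgη v h2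
  have huv2 : (u * v) * (u * v) = negOne := twist_sq A hA (χ * η) gm hgm (u * v) h3
  -- quaternion-level squares
  have cu : (u : ℍ[ℝ]) * (u : ℍ[ℝ]) = -1 := by
    have := congrArg (fun y : SU2 => (y : ℍ[ℝ])) hu2
    simpa [SU2.coe_mul, negOne_coe] using this
  -- conjugate u to i
  obtain ⟨w1, hw1⟩ := conj_to_qi cu (SU2.nsq u)
  have hw1u : w1 * u * w1⁻¹ = iSU := SU2.ext' (by rw [conj_coe hw1]; rfl)
  set v1 : SU2 := w1 * v * w1⁻¹ with hv1def
  set q1 : ℍ[ℝ] := (v1 : ℍ[ℝ]) with hq1def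
  have hv1sq : v1 * v1 = negOne := conj_negOne hv2
  have cv1 : q1 * q1 = -1 := by
    have := congrArg (fun y : SU2 => (y : ℍ[ℝ])) hv1sq
    simpa [SU2.coe_mul, negOne_coe] using this
  have hq1re : q1.re = 0 := pure_of_sq_neg_one (SU2.nsq v1) cv1
  have hiv1 : (iSU * v1) * (iSU * v1) = negOne := by
    have e2 : iSU * v1 = w1 * (u * v) * w1⁻¹ := by rw [conj_of_mul w1 u v, hw1u]
    rw [e2]
    exact conj_negOne huv2
  have c2 : (qi * q1) * (qi * q1) = -1 := by
    have := congrArg (fun y : SU2 => (y : ℍ[ℝ])) hiv1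
    simp only [SU2.coe_mul, negOne_coe] at this; exact this
  have hq1I : q1.imI = 0 := by
    have hnn : Quaternion.normSq (qi * q1) = 1 := SU2.nsq (iSU * v1)
    have hpre := pure_of_sq_neg_one hnn c2
    simp only [Quaternion.re_mul, qi_re, qi_imI, qi_imJ, qi_imK] at hpre
    linarith
  -- conjugate v1 to j, normalizing i up to sign
  obtain ⟨w2, hw2v, hw2i⟩ := build_w2 v1 cv1 hq1re hq1I
  -- the final conjugator
  set w : SU2 := w2 * w1 with hwdef
  have hu' : w * u * w⁻¹ = iSU ∨ w * u * w⁻¹ = negOne * iSU := by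
    rw [hwdef, conj_mul_split w2 w1 u, hw1u]
    exact hw2i
  have hv' : w * v * w⁻¹ = jSU := by
    rw [hwdef, conj_mul_split w2 w1 v, ← hv1def]
    exact mul_inv_eq_iff_eq_mul.mpr hw2v
  refine ⟨w, fun g => mem_Q8 ?_ ?_⟩
  · -- relation with i
    have base : sgn (χ g) * (w * A g * w⁻¹) = (w * u * w⁻¹) * (w * A g * w⁻¹) * (w * u * w⁻¹)⁻¹ := by
      rw [conj_sandwich w u (A g), ← h1 g, central_conj (sgn_central _ _)]
    have ri : sgn (χ g) * (w * A g * w⁻¹) = iSU * (w * A g * w⁻¹) * iSU⁻¹ := by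
      rcases hu' with h' | h'
      · rwa [h'] at base
      · rw [h'] at base
        rw [base, conj_negOne_mul]
    exact rel_to_cases (χ g) ri
  · have base : sgn (η g) * (w * A g * w⁻¹) = (w * v * w⁻¹) * (w * A g * w⁻¹) * (w * v * w⁻¹)⁻¹ := by
      rw [conj_sandwich w v (A g), ← h2 g, central_conj (sgn_central _ _)]
    have rj : sgn (η g) * (w * A g * w⁻¹) = jSU * (w * A g * w⁻¹) * jSU⁻¹ := by
      rwa [hv'] at base
    exact rel_to_cases (η g) rj
end

section
/- Let G be a group whose abelianization is infinite cyclic and whose commutator subgroup is perfect. Then every homomorphism A : G → SU(2) whose image is contained, after conjugation, in the binary dihedral group S¹ ∪ j·S¹ factors through the abelianization of G, and hence has image contained in a conjugate of the circle S¹ (i.e., A is reducible). -/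
open Quaternion

open scoped commutatorElement

lemma SU2.normSq_coe (u : SU2) : normSq (u : ℍ[ℝ]) = 1 := by
  have h : ‖(u : ℍ[ℝ])‖ = 1 := mem_sphere_zero_iff_norm.mp u.2
  rw [Quaternion.normSq_eq_norm_mul_self, h, one_mul]

lemma SU2.inv_coe (u : SU2) : ((u⁻¹ : SU2) : ℍ[ℝ]) = star (u : ℍ[ℝ]) := by
  rw [Metric.unitSphere.coe_inv, Quaternion.inv_def, SU2.normSq_coe, inv_one, one_smul]

noncomputable def circleSubgroup : Subgroup SU2 where
  carrier := circleSet
  mul_mem' := by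
    rintro a b ⟨ha1, ha2⟩ ⟨hb1, hb2⟩
    constructor <;>
      simp [Metric.unitSphere.coe_mul, Quaternion.imJ_mul, Quaternion.imK_mul, ha1, ha2, hb1, hb2]
  one_mem' := by constructor <;> simp [Metric.unitSphere.coe_one]
  inv_mem' := by
    rintro a ⟨ha1, ha2⟩
    have h := SU2.inv_coe a
    constructor <;> rw [show ((a⁻¹ : SU2) : ℍ[ℝ]) = star (a : ℍ[ℝ]) from h] <;>
      simp [ha1, ha2]

lemma circle_comm {a b : SU2} (ha : a ∈ circleSubgroup) (hb : b ∈ circleSubgroup) :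
    a * b = b * a := by
  obtain ⟨ha1, ha2⟩ := ha; obtain ⟨hb1, hb2⟩ := hb
  apply Subtype.ext
  rw [Metric.unitSphere.coe_mul, Metric.unitSphere.coe_mul]
  ext <;>
    simp [Quaternion.re_mul, Quaternion.imI_mul, Quaternion.imJ_mul, Quaternion.imK_mul,
      ha1, ha2, hb1, hb2] <;> ring

lemma binDih_coords {u : SU2} (hu : u ∈ binDihSet) :
    ((u : ℍ[ℝ]).imJ = 0 ∧ (u : ℍ[ℝ]).imK = 0) ∨ ((u : ℍ[ℝ]).re = 0 ∧ (u : ℍ[ℝ]).imI = 0) := by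
  rcases hu with h | ⟨v, ⟨hv1, hv2⟩, rfl⟩
  · exact Or.inl h
  · right
    rw [Metric.unitSphere.coe_mul]
    constructor <;>
      simp [jSU, Quaternion.re_mul, Quaternion.imI_mul, hv1, hv2] <;> simp [qj]

lemma comm_mem_circle {x y : SU2}
    (hx : ((x : ℍ[ℝ]).imJ = 0 ∧ (x : ℍ[ℝ]).imK = 0) ∨ ((x : ℍ[ℝ]).re = 0 ∧ (x : ℍ[ℝ]).imI = 0))
    (hy : ((y : ℍ[ℝ]).imJ = 0 ∧ (y : ℍ[ℝ]).imK = 0) ∨ ((y : ℍ[ℝ]).re = 0 ∧ (y : ℍ[ℝ]).imI = 0)) :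
    ⁅x, y⁆ ∈ circleSubgroup := by
  have hc : ((⁅x, y⁆ : SU2) : ℍ[ℝ]) = (x : ℍ[ℝ]) * y * star (x : ℍ[ℝ]) * star (y : ℍ[ℝ]) := by
    rw [commutatorElement_def, Metric.unitSphere.coe_mul, Metric.unitSphere.coe_mul, Metric.unitSphere.coe_mul,
      SU2.inv_coe, SU2.inv_coe]
  have : ((⁅x, y⁆ : SU2) : ℍ[ℝ]).imJ = 0 ∧ ((⁅x, y⁆ : SU2) : ℍ[ℝ]).imK = 0 := by
    rw [hc]
    obtain ⟨h1, h2⟩ | ⟨h1, h2⟩ := hx <;> obtain ⟨h3, h4⟩ | ⟨h3, h4⟩ := hy <;>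
      constructor <;>
        simp only [Quaternion.imJ_mul, Quaternion.imK_mul, Quaternion.re_mul, Quaternion.imI_mul,
          Quaternion.re_star, Quaternion.imI_star, Quaternion.imJ_star, Quaternion.imK_star,
          h1, h2, h3, h4] <;> ring
  exact this

lemma exists_conj_mem {v : SU2} (h : (v : ℍ[ℝ]).re = 0 ∧ (v : ℍ[ℝ]).imI = 0) :
    ∃ n : SU2, n * v * n⁻¹ ∈ circleSubgroup := by
  obtain ⟨h1, h2⟩ := h
  set c := (v : ℍ[ℝ]).imJ with hcdef
  set d := (v : ℍ[ℝ]).imK with hddef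
  have hcd : c ^ 2 + d ^ 2 = 1 := by
    have := SU2.normSq_coe v
    rw [normSq_def', h1, h2] at this
    linarith [this]
  set s : ℝ := (Real.sqrt 2)⁻¹ with hsdef
  have hs : s ^ 2 = 1 / 2 := by
    rw [hsdef, inv_pow, Real.sq_sqrt (by norm_num : (0:ℝ) ≤ 2)]
    norm_num
  have hn : normSq (id (α := ℍ[ℝ]) ⟨0, s, s * c, s * d⟩) = 1 := by
    rw [normSq_def']
    simp only [id]
    nlinarith [hs, hcd]
  refine ⟨⟨id (α := ℍ[ℝ]) ⟨0, s, s * c, s * d⟩, mem_SU2_of_normSq hn⟩, ?_, ?_⟩ <;>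
    · rw [Metric.unitSphere.coe_mul, Metric.unitSphere.coe_mul, SU2.inv_coe]
      simp only [Quaternion.imJ_mul, Quaternion.imK_mul, Quaternion.re_mul, Quaternion.imI_mul,
        Quaternion.re_star, Quaternion.imI_star, Quaternion.imJ_star, Quaternion.imK_star,
        h1, h2]
      dsimp only [id]
      show _ = (0:ℝ)
      first
        | linear_combination (s ^ 2 * c) * hcd
        | linear_combination (s ^ 2 * d) * hcd


/-- If `G` has infinite cyclic abelianization and perfect commutator subgroup, then any
homomorphism `A : G →* SU(2)` whose image lies (after conjugation) in the binary
dihedral group `S¹ ∪ j·S¹` factors through the abelianization of `G`, and hence has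
image in a conjugate of the circle `S¹` (i.e. `A` is reducible). -/
theorem binary_dihedral_rep_reducible {G : Type*} [Group G]
    (h1 : Nonempty (Abelianization G ≃* Multiplicative ℤ))
    (h2 : commutator ↥(commutator G) = ⊤)
    (A : G →* SU2) (w : SU2) (hw : ∀ g : G, w * A g * w⁻¹ ∈ binDihSet) :
    (∃ B : Abelianization G →* SU2, A = B.comp Abelianization.of) ∧
    ∃ g : SU2, ∀ x : G, g * A x * g⁻¹ ∈ circleSet := by
  classical
  set A' : G →* SU2 := (MulAut.conj w).toMonoidHom.comp A with hA'def
  have hA'apply : ∀ g : G, A' g = w * A g * w⁻¹ := fun g => rfl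
  have hA'dih : ∀ g : G, A' g ∈ binDihSet := fun g => hw g
  -- commutators land in the circle
  have hKcirc : commutator G ≤ circleSubgroup.comap A' := by
    rw [commutator_def, Subgroup.commutator_le]
    intro g _ h _
    rw [Subgroup.mem_comap, map_commutatorElement]
    exact comm_mem_circle (binDih_coords (hA'dih g)) (binDih_coords (hA'dih h))
  -- A' is trivial on the commutator subgroup, by perfectness
  have hker : ∀ x ∈ commutator G, A x = 1 := by
    intro x hx
    set K := commutator G with hK
    set A'' : ↥K →* SU2 := A'.comp K.subtype with hA''def
    have hle : commutator ↥K ≤ A''.ker := by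
      rw [commutator_def, Subgroup.commutator_le]
      intro a _ b _
      rw [MonoidHom.mem_ker, map_commutatorElement]
      have ha : A'' a ∈ circleSubgroup := hKcirc a.2
      have hb : A'' b ∈ circleSubgroup := hKcirc b.2
      exact commutatorElement_eq_one_iff_commute.mpr (circle_comm ha hb)
    have hmem : (⟨x, hx⟩ : ↥K) ∈ commutator ↥K := by rw [h2]; trivial
    have h1' : A'' ⟨x, hx⟩ = 1 := hle hmem
    have h2' : A' x = 1 := h1'
    have : (MulAut.conj w) (A x) = (MulAut.conj w) 1 := by
      rw [map_one]; exact h2'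
    exact (MulAut.conj w).injective this
  -- the factorization
  let B : Abelianization G →* SU2 := QuotientGroup.lift (commutator G) A hker
  have hfac : A = B.comp Abelianization.of := MonoidHom.ext fun x => rfl
  refine ⟨⟨B, hfac⟩, ?_⟩
  -- reducibility
  obtain ⟨e⟩ := h1
  obtain ⟨x₀, hx₀⟩ : ∃ x₀ : G, Abelianization.of x₀ = e.symm (Multiplicative.ofAdd 1) :=
    QuotientGroup.mk_surjective _
  have hpow : ∀ x : G, ∃ m : ℤ, A x = (A x₀) ^ m := by
    intro x
    refine ⟨(e (Abelianization.of x)).toAdd, ?_⟩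
    have hx : Abelianization.of x
        = (e.symm (Multiplicative.ofAdd 1)) ^ ((e (Abelianization.of x)).toAdd) := by
      apply e.injective
      rw [map_zpow, MulEquiv.apply_symm_apply, ← ofAdd_zsmul, smul_eq_mul, mul_one,
        ofAdd_toAdd]
    have hAx : A x = B (Abelianization.of x) := by rw [hfac]; rfl
    have hAx₀ : A x₀ = B (Abelianization.of x₀) := by rw [hfac]; rfl
    rw [hAx, hAx₀, hx₀, ← map_zpow, ← hx]
  have key : ∀ g : SU2, g * A x₀ * g⁻¹ ∈ circleSubgroup →
      ∀ x : G, g * A x * g⁻¹ ∈ circleSet := by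
    intro g hg x
    obtain ⟨m, hm⟩ := hpow x
    have h3 := map_zpow (MulAut.conj g) (A x₀) m
    simp only [MulAut.conj_apply] at h3
    rw [hm, h3]
    exact circleSubgroup.zpow_mem hg m
  rcases binDih_coords (hA'dih x₀) with hcase | hcase
  · exact ⟨w, key w hcase⟩
  · obtain ⟨n, hn⟩ := exists_conj_mem hcase
    refine ⟨n * w, key (n * w) ?_⟩
    have : n * w * A x₀ * (n * w)⁻¹ = n * (w * A x₀ * w⁻¹) * n⁻¹ := by group
    rw [this]
    exact hn
end
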